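/- arXiv:2309.05288 — 13 statements merged into one kernel-verified Lean document; each statement's English description precedes it below -/
import Mathlib

section
/- Let F be a finite field of characteristic p, let C be a linear code of length n over F, and let σ be a permutation automorphism of C of order m with p not dividing m. Then C is the internal direct sum of its fixed subcode and its even-sum subcode, i.e. C = F_σ(C) ⊕ E_σ(C) (meaning F_σ(C) + E_σ(C) = C and F_σ(C) ∩ E_σ(C) = {0}), and both F_σ(C) and E_σ(C) are invariant under σ. -/
open Finset

/-- The action of a permutation `σ` on vectors by permuting coordinates: `(vσ) i = v (σ i)`. -/
def permAct {F : Type*} {n : ℕ} (σ : Equiv.Perm (Fin n)) (v : Fin n → F) : Fin n → F :=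
  fun i => v (σ i)

open Classical in
/-- The cycle (orbit) of `σ` containing the coordinate `i`, as a `Finset`
(fixed points are counted as cycles of length 1). -/
noncomputable def orbitOf {n : ℕ} (σ : Equiv.Perm (Fin n)) (i : Fin n) : Finset (Fin n) :=
  Finset.univ.filter (fun j => σ.SameCycle i j)

/-- The Euclidean inner product `u·v = ∑ i, u i * v i`. -/
def eInner {F : Type*} [Field F] {ι : Type*} [Fintype ι] (u v : ι → F) : F :=
  ∑ i, u i * v i

/-- The Euclidean dual of a set of vectors. -/
def dualSet {F : Type*} [Field F] {ι : Type*} [Fintype ι] (S : Set (ι → F)) : Set (ι → F) :=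
  {u | ∀ v ∈ S, eInner u v = 0}

/-- A set of vectors is self-orthogonal if it is contained in its dual. -/
def IsSelfOrthogonalSet {F : Type*} [Field F] {ι : Type*} [Fintype ι] (S : Set (ι → F)) : Prop :=
  S ⊆ dualSet S

/-- A set of vectors is self-dual if it equals its dual. -/
def IsSelfDualSet {F : Type*} [Field F] {ι : Type*} [Fintype ι] (S : Set (ι → F)) : Prop :=
  S = dualSet S

/-- A set of vectors is LCD (linear complementary dual) if it meets its dual only in `0`. -/
def IsLCDSet {F : Type*} [Field F] {ι : Type*} [Fintype ι] (S : Set (ι → F)) : Prop :=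
  S ∩ dualSet S = {0}

/-- The fixed subcode `F_σ(C) = {v ∈ C : vσ = v}`. -/
def fixedCode {F : Type*} [Field F] {n : ℕ} (σ : Equiv.Perm (Fin n))
    (C : Submodule F (Fin n → F)) : Set (Fin n → F) :=
  {v | v ∈ C ∧ permAct σ v = v}

/-- The subcode `E_σ(C) = {v ∈ C : the sum of the coordinates of v over each cycle of σ is 0}`. -/
def evenCode {F : Type*} [Field F] {n : ℕ} (σ : Equiv.Perm (Fin n))
    (C : Submodule F (Fin n → F)) : Set (Fin n → F) :=
  {v | v ∈ C ∧ ∀ i : Fin n, ∑ j ∈ orbitOf σ i, v j = 0}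

/-- If `C` is a linear code over a finite field `F` of characteristic `p`
with a permutation automorphism `σ` of order `m` where `p ∤ m`, then
`C = F_σ(C) ⊕ E_σ(C)` (every codeword splits, and the two subcodes meet only in `0`),
and both subcodes are `σ`-invariant. -/
theorem code_decomposition_fixed_even {F : Type*} [Field F] [Fintype F] (p : ℕ) [CharP F p]
    {n m : ℕ} (σ : Equiv.Perm (Fin n)) (hord : orderOf σ = m) (hm : ¬ p ∣ m)
    (C : Submodule F (Fin n → F)) (hC : ∀ v, v ∈ C ↔ permAct σ v ∈ C) :
    (∀ v ∈ C, ∃ w ∈ fixedCode σ C, ∃ x ∈ evenCode σ C, v = w + x) ∧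
    (fixedCode σ C ∩ evenCode σ C = {0}) ∧
    (∀ v ∈ fixedCode σ C, permAct σ v ∈ fixedCode σ C) ∧
    (∀ v ∈ evenCode σ C, permAct σ v ∈ evenCode σ C) := by
  classical
  have hm0 : m ≠ 0 := fun h => hm (h ▸ dvd_zero p)
  have hmF : (m : F) ≠ 0 := fun h => hm ((CharP.cast_eq_zero_iff F p m).mp h)
  -- powers of σ preserve C
  have hpow : ∀ (k : ℕ) (v : Fin n → F), v ∈ C → permAct (σ ^ k) v ∈ C := by
    intro k
    induction k with
    | zero =>
      intro v hv
      have h0 : permAct (σ ^ 0) v = v := funext fun i => by simp [permAct]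
      rw [h0]; exact hv
    | succ k ih =>
      intro v hv
      have h1 := (hC (permAct (σ ^ k) v)).mp (ih v hv)
      have h2 : permAct (σ ^ (k + 1)) v = permAct σ (permAct (σ ^ k) v) := by
        funext i; simp [permAct, pow_succ, Equiv.Perm.mul_apply]
      rw [h2]; exact h1
  -- summing a shifted function over an orbit
  have hsum : ∀ (k : ℕ) (u : Fin n → F) (i : Fin n),
      ∑ j ∈ orbitOf σ i, u ((σ ^ k) j) = ∑ j ∈ orbitOf σ i, u j := by
    intro k u i
    refine Finset.sum_equiv (σ ^ k : Equiv.Perm (Fin n)) ?_ ?_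
    · intro j
      simp [orbitOf, Equiv.Perm.sameCycle_pow_right]
    · intro j _; rfl
  refine ⟨?_, ?_, ?_, ?_⟩
  · -- decomposition
    intro v hv
    set w : Fin n → F := (m : F)⁻¹ • ∑ k ∈ Finset.range m, permAct (σ ^ k) v with hw
    have hwC : w ∈ C :=
      Submodule.smul_mem _ _ (Submodule.sum_mem _ fun k _ => hpow k v hv)
    have hgm : ∀ i : Fin n, v ((σ ^ m) i) = v ((σ ^ 0) i) := by
      intro i
      rw [← hord, pow_orderOf_eq_one σ]
      simp
    have hwfix : permAct σ w = w := by
      funext i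
      simp only [permAct, hw, Pi.smul_apply, Finset.sum_apply, smul_eq_mul]
      congr 1
      have key : ∀ k, (permAct (σ ^ k) v) (σ i) = v ((σ ^ (k + 1)) i) := by
        intro k; simp [permAct, pow_succ, Equiv.Perm.mul_apply]
      calc ∑ k ∈ Finset.range m, (permAct (σ ^ k) v) (σ i)
          = ∑ k ∈ Finset.range m, v ((σ ^ (k + 1)) i) := by
            exact Finset.sum_congr rfl fun k _ => key k
        _ = ∑ k ∈ Finset.range m, v ((σ ^ k) i) := by
            have h1 : (∑ k ∈ Finset.range m, v ((σ ^ (k + 1)) i)) + v ((σ ^ 0) i)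
                = (∑ k ∈ Finset.range m, v ((σ ^ k) i)) + v ((σ ^ m) i) := by
              rw [← Finset.sum_range_succ' (fun k => v ((σ ^ k) i)) m,
                Finset.sum_range_succ]
            rw [hgm i] at h1
            exact add_right_cancel h1
        _ = ∑ k ∈ Finset.range m, (permAct (σ ^ k) v) i := rfl
    have hws : ∀ i : Fin n, ∑ j ∈ orbitOf σ i, w j = ∑ j ∈ orbitOf σ i, v j := by
      intro i
      simp only [hw, Pi.smul_apply, Finset.sum_apply, smul_eq_mul]
      rw [← Finset.mul_sum, Finset.sum_comm]
      have : ∀ k ∈ Finset.range m,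
          ∑ j ∈ orbitOf σ i, (permAct (σ ^ k) v) j = ∑ j ∈ orbitOf σ i, v j := by
        intro k _
        exact hsum k v i
      rw [Finset.sum_congr rfl this, Finset.sum_const, Finset.card_range,
        nsmul_eq_mul, ← mul_assoc, inv_mul_cancel₀ hmF, one_mul]
    refine ⟨w, ⟨hwC, hwfix⟩, v - w, ⟨Submodule.sub_mem _ hv hwC, ?_⟩, by abel⟩
    intro i
    simp only [Pi.sub_apply, Finset.sum_sub_distrib, hws i, sub_self]
  · -- intersection is {0}
    ext v
    simp only [Set.mem_inter_iff, Set.mem_singleton_iff, fixedCode, evenCode,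
      Set.mem_setOf_eq]
    constructor
    · rintro ⟨⟨hvC, hfix⟩, _, heven⟩
      funext i
      have hfix' : ∀ (k : ℕ) (x : Fin n), v ((σ ^ k) x) = v x := by
        intro k
        induction k with
        | zero => intro x; simp
        | succ k ih =>
          intro x
          have : (σ ^ (k + 1)) x = (σ ^ k) (σ x) := by
            simp [pow_succ, Equiv.Perm.mul_apply]
          rw [this, ih (σ x)]
          exact congrFun hfix x
      have hconst : ∀ j ∈ orbitOf σ i, v j = v i := by
        intro j hj
        have hsc : σ.SameCycle i j := by simpa [orbitOf] using hj
        obtain ⟨k, _, hk⟩ := hsc.exists_pow_eq'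
        rw [← hk, hfix' k i]
      have hsumc : ∑ j ∈ orbitOf σ i, v j = ((orbitOf σ i).card : F) * v i := by
        rw [Finset.sum_congr rfl hconst, Finset.sum_const, nsmul_eq_mul]
      have hdvd : (orbitOf σ i).card ∣ m := by
        by_cases hfi : σ i = i
        · have horb1 : orbitOf σ i = {i} := by
            ext j
            simp only [orbitOf, Finset.mem_filter, Finset.mem_univ, true_and,
              Finset.mem_singleton]
            constructor
            · rintro ⟨z, hz⟩
              rw [← hz, Equiv.Perm.zpow_apply_eq_self_of_apply_eq_self hfi]
            · rintro rfl; exact ⟨0, by simp⟩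
          rw [horb1]; simp
        · have h1 : orbitOf σ i = (σ.cycleOf i).support := by
            ext j
            simp only [orbitOf, Finset.mem_filter, Finset.mem_univ, true_and,
              Equiv.Perm.mem_support_cycleOf_iff]
            exact ⟨fun h => ⟨h, Equiv.Perm.mem_support.mpr hfi⟩, fun h => h.1⟩
          rw [h1, ← Equiv.Perm.IsCycle.orderOf (Equiv.Perm.isCycle_cycleOf σ hfi), ← hord]
          exact Equiv.Perm.orderOf_cycleOf_dvd_orderOf σ i
      have hcard : ((orbitOf σ i).card : F) ≠ 0 := by
        intro h
        exact hm (dvd_trans ((CharP.cast_eq_zero_iff F p _).mp h) hdvd)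
      have := heven i
      rw [hsumc] at this
      have := (mul_eq_zero.mp this).resolve_left hcard
      simpa using this
    · rintro rfl
      exact ⟨⟨C.zero_mem, funext fun i => rfl⟩, C.zero_mem, fun i => by simp⟩
  · -- fixedCode is σ-invariant
    rintro v ⟨hvC, hfix⟩
    rw [hfix]; exact ⟨hvC, hfix⟩
  · -- evenCode is σ-invariant
    rintro v ⟨hvC, hev⟩
    refine ⟨(hC v).mp hvC, fun i => ?_⟩
    have : ∑ j ∈ orbitOf σ i, (permAct σ v) j = ∑ j ∈ orbitOf σ i, v ((σ ^ 1) j) := by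
      simp [permAct]
    rw [this, hsum 1 v i]
    exact hev i
end

section
/- Let F be a finite field of characteristic p, let C be a linear code of length n over F, and let σ be a permutation automorphism of C. Then the subcodes E_σ(C) and F_σ(C) are orthogonal to each other with respect to the Euclidean inner product: for every v ∈ E_σ(C) and every w ∈ F_σ(C), one has v·w = Σ_{i=1}^n v_i w_i = 0. -/
open Finset

lemma fixed_zpow_aux {F : Type*} {n : ℕ} (σ : Equiv.Perm (Fin n)) (w : Fin n → F)
    (hw : ∀ i, w (σ i) = w i) : ∀ (k : ℤ) (i : Fin n), w ((σ ^ k) i) = w i := by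
  intro k
  induction k using Int.induction_on with
  | zero => simp
  | succ k ih => intro i; rw [add_comm, zpow_add, zpow_one, Equiv.Perm.mul_apply, hw, ih]
  | pred k ih =>
      intro i
      rw [sub_eq_add_neg, zpow_add, Equiv.Perm.mul_apply, zpow_neg_one, ih]
      conv_rhs => rw [← show σ (σ⁻¹ i) = i from Equiv.apply_symm_apply σ i, hw]

/-- For a linear code `C` over a finite field of characteristic `p` with a
permutation automorphism `σ`, the subcodes `E_σ(C)` and `F_σ(C)` are orthogonal to each other
with respect to the Euclidean inner product. -/
theorem even_fixed_euclidean_orthogonal {F : Type*} [Field F] [Fintype F] (p : ℕ) [CharP F p]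
    {n : ℕ} (σ : Equiv.Perm (Fin n))
    (C : Submodule F (Fin n → F)) (hC : ∀ v, v ∈ C ↔ permAct σ v ∈ C) :
    ∀ v ∈ evenCode σ C, ∀ w ∈ fixedCode σ C, eInner v w = 0 := by
  rintro v ⟨hvC, hv⟩ w ⟨hwC, hwfix⟩
  have hw : ∀ i, w (σ i) = w i := fun i => congrFun hwfix i
  have hconst : ∀ i j : Fin n, σ.SameCycle i j → w j = w i := by
    rintro i j ⟨k, rfl⟩; exact fixed_zpow_aux σ w hw k i
  classical
  have hequiv : Equivalence σ.SameCycle :=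
    ⟨fun x => Equiv.Perm.SameCycle.refl σ x, fun h => h.symm, fun h h' => h.trans h'⟩
  unfold eInner
  apply Finset.sum_cancels_of_partition_cancels (Setoid.mk σ.SameCycle hequiv)
  intro x _
  have key : (∑ a ∈ orbitOf σ x, v a * w a) = 0 := by
    calc (∑ a ∈ orbitOf σ x, v a * w a)
        = ∑ a ∈ orbitOf σ x, v a * w x := by
          apply Finset.sum_congr rfl
          intro a ha
          rw [hconst x a (by simpa [orbitOf] using ha)]
      _ = (∑ a ∈ orbitOf σ x, v a) * w x := by rw [Finset.sum_mul]
      _ = 0 := by rw [hv x, zero_mul]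
  rw [← key]
  apply Finset.sum_congr _ (fun _ _ => rfl)
  ext a
  simp only [orbitOf, Finset.mem_filter, Finset.mem_univ, true_and]
  exact ⟨fun h => Equiv.Perm.SameCycle.symm h, fun h => Equiv.Perm.SameCycle.symm h⟩
end

section
/- Let F be a finite field with r² elements, where r is a power of the characteristic p, with conjugation a ↦ ā = a^r. Let C be a linear code of length n over F and let σ be a permutation automorphism of C. Then E_σ(C) and F_σ(C) are orthogonal with respect to the Hermitian inner product: for every v ∈ E_σ(C) and every w ∈ F_σ(C), one has (v,w) = Σ_{i=1}^n v_i (w_i)^r = 0. -/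
open Finset

/-- Let `F` be a finite field with `r²` elements, `r` a power of the
characteristic `p`, with conjugation `a ↦ a^r`. For a linear code `C` over `F` with a
permutation automorphism `σ`, the subcodes `E_σ(C)` and `F_σ(C)` are orthogonal with respect
to the Hermitian inner product `(v,w) = ∑ i, v i * (w i)^r`. -/
theorem even_fixed_hermitian_orthogonal {F : Type*} [Field F] [Fintype F] (p r : ℕ)
    [CharP F p] (hr : ∃ a : ℕ, r = p ^ a) (hcard : Fintype.card F = r ^ 2)
    {n : ℕ} (σ : Equiv.Perm (Fin n))
    (C : Submodule F (Fin n → F)) (hC : ∀ v, v ∈ C ↔ permAct σ v ∈ C) :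
    ∀ v ∈ evenCode σ C, ∀ w ∈ fixedCode σ C, ∑ i, v i * (w i) ^ r = 0 := by
  classical
  intro v hv w hw
  obtain ⟨hvC, hv0⟩ := hv
  obtain ⟨hwC, hwfix⟩ := hw
  have hw1 : ∀ i, w (σ i) = w i := fun i => congrFun hwfix i
  have hwz : ∀ (k : ℤ) (i : Fin n), w ((σ ^ k) i) = w i := by
    intro k i
    induction k using Int.induction_on with
    | zero => simp
    | succ k ih =>
        have h : (σ ^ ((k:ℤ)+1)) i = σ ((σ ^ (k:ℤ)) i) := by
          rw [← Equiv.Perm.mul_apply, ← zpow_one_add]; ring_nf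
        rw [h, hw1, ih]
    | pred k ih =>
        have h : (σ ^ (-(k:ℤ))) i = σ ((σ ^ (-(k:ℤ)-1)) i) := by
          rw [← Equiv.Perm.mul_apply, ← zpow_one_add]; ring_nf
        rw [← ih, h, hw1]
  have hconst : ∀ i j : Fin n, σ.SameCycle i j → w j = w i := by
    rintro i j ⟨k, hk⟩; rw [← hk, hwz]
  set R : Setoid (Fin n) :=
    ⟨σ.SameCycle, ⟨fun x => Equiv.Perm.SameCycle.refl σ x,
      fun h => h.symm, fun h h' => h.trans h'⟩⟩ with hR
  have key := Finset.sum_fiberwise_of_maps_to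
      (s := (univ : Finset (Fin n))) (g := fun i : Fin n => @Quotient.mk _ R i) (t := (univ : Finset (Quotient R)))
      (fun x _ => mem_univ _) (fun i => v i * w i ^ r)
  rw [← key]
  apply Finset.sum_eq_zero
  intro q _
  obtain ⟨i, rfl⟩ := Quotient.exists_rep q
  have hfil : (univ.filter (fun j => @Quotient.mk _ R j = @Quotient.mk _ R i))
      = orbitOf σ i := by
    ext j
    simp only [orbitOf, mem_filter, mem_univ, true_and, Quotient.eq]
    exact ⟨fun h => h.symm, fun h => h.symm⟩
  rw [hfil]
  have hcg : ∀ j ∈ orbitOf σ i, v j * w j ^ r = v j * w i ^ r := by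
    intro j hj
    simp only [orbitOf, mem_filter] at hj
    rw [hconst i j hj.2]
  rw [Finset.sum_congr rfl hcg, ← Finset.sum_mul, hv0 i, zero_mul]
end

section
/- Let F be a finite field of characteristic p, let σ be a permutation of {1,…,n} with s cycles (fixed points counted as cycles of length 1), and suppose every cycle of σ has length congruent to l modulo p. Then for any two vectors v, w ∈ F^n that are fixed by σ (i.e. constant on each cycle of σ), the Euclidean inner products satisfy v·w = l·(π(v)·π(w)) in F, where the factor l is the image of the natural number l in F. -/
open Finset

/-- The setoid on coordinates whose classes are the cycles (orbits) of `σ`. -/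
def cycleSetoid {n : ℕ} (σ : Equiv.Perm (Fin n)) : Setoid (Fin n) :=
  ⟨σ.SameCycle, ⟨fun x => Equiv.Perm.SameCycle.refl σ x, fun h => h.symm, fun h h' => h.trans h'⟩⟩

/-- The set of cycles of `σ` (fixed points counted as cycles of length 1); if `σ` has `s`
cycles then `Cycles σ → F` is a copy of `F^s`. -/
abbrev Cycles {n : ℕ} (σ : Equiv.Perm (Fin n)) : Type :=
  Quotient (cycleSetoid σ)

noncomputable instance {n : ℕ} (σ : Equiv.Perm (Fin n)) : Fintype (Cycles σ) :=
  @Fintype.ofFinite _ (Quotient.finite _)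

/-- The projection `π` picking one coordinate from each cycle of `σ`; on a `σ`-fixed vector
this is the common value of the vector on each cycle. -/
noncomputable def projPi {F : Type*} {n : ℕ} (σ : Equiv.Perm (Fin n)) (v : Fin n → F) :
    Cycles σ → F :=
  fun c => v c.out

lemma fixed_const {F : Type*} {n : ℕ} (σ : Equiv.Perm (Fin n)) (v : Fin n → F)
    (hv : permAct σ v = v) {i j : Fin n} (h : σ.SameCycle i j) : v i = v j := by
  obtain ⟨k, -, hk⟩ := h.exists_pow_eq'
  have hstep : ∀ m : ℕ, v ((σ ^ m) i) = v i := by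
    intro m
    induction m with
    | zero => simp
    | succ m ih =>
        have := congrFun hv ((σ ^ m) i)
        simp only [permAct] at this
        rw [pow_succ']
        simpa [Equiv.Perm.mul_apply] using this.trans ih
  rw [← hk, hstep]

/-- If every cycle of `σ` has length congruent to `l` modulo the
characteristic `p`, then for `σ`-fixed vectors `v, w` one has
`v·w = l·(π(v)·π(w))` in `F`. -/
theorem inner_fixed_eq_card_mul_proj_inner {F : Type*} [Field F] [Fintype F] (p : ℕ)
    [CharP F p] {n : ℕ} (σ : Equiv.Perm (Fin n)) (l : ℕ)
    (hcyc : ∀ i : Fin n, (orbitOf σ i).card ≡ l [MOD p])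
    (v w : Fin n → F) (hv : permAct σ v = v) (hw : permAct σ w = w) :
    eInner v w = (l : F) * eInner (projPi σ v) (projPi σ w) := by
  classical
  unfold eInner projPi
  rw [Finset.mul_sum]
  rw [← Finset.sum_fiberwise Finset.univ (fun i => (Quotient.mk (cycleSetoid σ) i : Cycles σ))
    (fun i => v i * w i)]
  refine Finset.sum_congr rfl fun c _ => ?_
  have hfib : Finset.univ.filter
      (fun i => (Quotient.mk (cycleSetoid σ) i : Cycles σ) = c) = orbitOf σ c.out := by
    ext i
    simp only [orbitOf, Finset.mem_filter, Finset.mem_univ, true_and]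
    letI := cycleSetoid σ
    constructor
    · intro h; exact h ▸ Quotient.mk_out i
    · intro h
      rw [← Quotient.out_eq c]
      exact Quotient.sound (Setoid.symm h)
  rw [hfib]
  have hconst : ∀ i ∈ orbitOf σ c.out, v i * w i = v c.out * w c.out := by
    intro i hi
    simp only [orbitOf, Finset.mem_filter] at hi
    rw [← fixed_const σ v hv hi.2, ← fixed_const σ w hw hi.2]
  rw [Finset.sum_congr rfl hconst, Finset.sum_const, nsmul_eq_mul]
  congr 1
  exact (CharP.natCast_eq_natCast F p).mpr (hcyc c.out)
end

section
/- Let F be a finite field of characteristic p and let C be a quasi-cyclic code over F of length sm and index s, where p does not divide m. Then: (1) if C is Euclidean self-orthogonal, so is C_π; (2) if C is Euclidean self-dual, so is C_π; (3) if C is Euclidean LCD, so is C_π. -/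
open Finset

/-- The quasi-cyclic shift permutation action on `F^{sm}` (coordinates indexed by
`(i,j) ∈ {1,…,s} × Z_m`): the coordinate of `vσ` at `(i,j)` is `v (i, j+1)`. -/
def qcShift {F : Type*} {s m : ℕ} (v : Fin s × ZMod m → F) : Fin s × ZMod m → F :=
  fun ij => v (ij.1, ij.2 + 1)

/-- The projection `π : F^{sm} → F^s`; on a shift-fixed vector it returns the common value
on each block. -/
def qcPi {F : Type*} {s m : ℕ} (v : Fin s × ZMod m → F) : Fin s → F :=
  fun i => v (i, 0)

/-- The map `ψ : F^{sm} → F^s`, `ψ(v) i = ∑_{j ∈ Z_m} v (i,j)`. -/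
def qcPsi {F : Type*} [Field F] {s m : ℕ} [NeZero m] (v : Fin s × ZMod m → F) : Fin s → F :=
  fun i => ∑ j : ZMod m, v (i, j)

section Aux

variable {F : Type*} [Field F] {s m : ℕ} [NeZero m]

lemma qc_fix_apply (v : Fin s × ZMod m → F) (hv : qcShift v = v) (i : Fin s) (j : ZMod m) :
    v (i, j) = v (i, 0) := by
  have h : ∀ j : ZMod m, v (i, j + 1) = v (i, j) := fun j => congrFun hv (i, j)
  have key : ∀ n : ℕ, v (i, (n : ZMod m)) = v (i, 0) := by
    intro n
    induction n with
    | zero => simp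
    | succ k ih => push_cast; rw [h, ih]
  have := key j.val
  rwa [ZMod.natCast_val, ZMod.cast_id] at this

lemma qc_inner_fixed (u w : Fin s × ZMod m → F) (hu : qcShift u = u) :
    eInner u w = eInner (qcPi u) (qcPsi w) := by
  unfold eInner qcPi qcPsi
  rw [Fintype.sum_prod_type]
  refine Finset.sum_congr rfl fun i _ => ?_
  rw [Finset.mul_sum]
  refine Finset.sum_congr rfl fun j _ => ?_
  rw [qc_fix_apply u hu]

lemma qc_psi_of_fixed (v : Fin s × ZMod m → F) (hv : qcShift v = v) (i : Fin s) :
    qcPsi v i = (m : F) * qcPi v i := by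
  unfold qcPsi qcPi
  rw [Finset.sum_congr rfl fun j _ => qc_fix_apply v hv i j, Finset.sum_const,
    nsmul_eq_mul]
  congr 1
  simp [ZMod.card]

lemma qc_sum_shift (f : ZMod m → F) (c : ZMod m) :
    ∑ k : ZMod m, f (c + k) = ∑ k : ZMod m, f k :=
  Fintype.sum_equiv (Equiv.addLeft c) _ _ (fun k => rfl)

/-- The average (sum over all shifts) of a vector. -/
def qcAvg (w : Fin s × ZMod m → F) : Fin s × ZMod m → F :=
  fun ij => ∑ k : ZMod m, w (ij.1, ij.2 + k)

lemma qcAvg_fixed (w : Fin s × ZMod m → F) : qcShift (qcAvg w) = qcAvg w := by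
  funext ij
  show ∑ k : ZMod m, w (ij.1, ij.2 + 1 + k) = ∑ k : ZMod m, w (ij.1, ij.2 + k)
  rw [qc_sum_shift (fun t => w (ij.1, t)) (ij.2 + 1),
    qc_sum_shift (fun t => w (ij.1, t)) ij.2]

lemma qcPi_qcAvg (w : Fin s × ZMod m → F) : qcPi (qcAvg w) = qcPsi w := by
  funext i
  show ∑ k : ZMod m, w (i, 0 + k) = ∑ k : ZMod m, w (i, k)
  simp

lemma qcAvg_mem (C : Submodule F (Fin s × ZMod m → F))
    (hC : ∀ v, v ∈ C ↔ qcShift v ∈ C) (w : Fin s × ZMod m → F) (hw : w ∈ C) :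
    qcAvg w ∈ C := by
  have hshift : ∀ n : ℕ, (fun ij : Fin s × ZMod m => w (ij.1, ij.2 + (n : ZMod m))) ∈ C := by
    intro n
    induction n with
    | zero => simpa using hw
    | succ k ih =>
      have := (hC _).mp ih
      have heq : qcShift (fun ij : Fin s × ZMod m => w (ij.1, ij.2 + (k : ZMod m))) =
          (fun ij : Fin s × ZMod m => w (ij.1, ij.2 + ((k + 1 : ℕ) : ZMod m))) := by
        funext ij
        show w (ij.1, ij.2 + 1 + (k : ZMod m)) = w (ij.1, ij.2 + ((k + 1 : ℕ) : ZMod m))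
        push_cast
        ring_nf
      rwa [heq] at this
  have : qcAvg w = ∑ k : ZMod m, (fun ij : Fin s × ZMod m => w (ij.1, ij.2 + k)) := by
    funext ij
    rw [Finset.sum_apply]
    rfl
  rw [this]
  refine Submodule.sum_mem C fun k _ => ?_
  have := hshift k.val
  simpa [ZMod.natCast_val, ZMod.cast_id] using this

end Aux

/-- Let `C` be a quasi-cyclic code over a finite field of characteristic `p`
of length `sm` and index `s`, where `p ∤ m`. Then `C_π = π(F_σ(C))` inherits being
self-orthogonal, self-dual, and LCD (Euclidean inner product) from `C`. -/
theorem qc_proj_code {F : Type*} [Field F] [Fintype F] (p : ℕ) [CharP F p]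
    {s m : ℕ} [NeZero m] (hm : ¬ p ∣ m)
    (C : Submodule F (Fin s × ZMod m → F))
    (hC : ∀ v, v ∈ C ↔ qcShift v ∈ C) :
    (IsSelfOrthogonalSet (C : Set (Fin s × ZMod m → F)) →
      IsSelfOrthogonalSet (qcPi '' {v | v ∈ C ∧ qcShift v = v})) ∧
    (IsSelfDualSet (C : Set (Fin s × ZMod m → F)) →
      IsSelfDualSet (qcPi '' {v | v ∈ C ∧ qcShift v = v})) ∧
    (IsLCDSet (C : Set (Fin s × ZMod m → F)) →
      IsLCDSet (qcPi '' {v | v ∈ C ∧ qcShift v = v})) := by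
  set S : Set (Fin s → F) := qcPi '' {v | v ∈ C ∧ qcShift v = v} with hS
  have hm' : (m : F) ≠ 0 := fun h => hm ((CharP.cast_eq_zero_iff F p m).mp h)
  -- ψ of any codeword lies in the projected code
  have hψ : ∀ w ∈ C, qcPsi w ∈ S := by
    intro w hw
    exact ⟨qcAvg w, ⟨qcAvg_mem C hC w hw, qcAvg_fixed w⟩, qcPi_qcAvg w⟩
  -- inner product of a fixed vector with a codeword, in terms of π and ψ
  have hinner2 : ∀ (u v : Fin s × ZMod m → F), qcShift u = u → qcShift v = v →
      eInner u v = (m : F) * eInner (qcPi u) (qcPi v) := by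
    intro u v hu hv
    rw [qc_inner_fixed u v hu]
    unfold eInner
    rw [Finset.mul_sum]
    refine Finset.sum_congr rfl fun i _ => ?_
    rw [qc_psi_of_fixed v hv]
    ring
  -- self-orthogonality
  have hSO : IsSelfOrthogonalSet (C : Set (Fin s × ZMod m → F)) → IsSelfOrthogonalSet S := by
    intro hso
    rintro a ⟨u, ⟨huC, hufix⟩, rfl⟩ b ⟨v, ⟨hvC, hvfix⟩, rfl⟩
    have h0 : eInner u v = 0 := hso huC v hvC
    have := hinner2 u v hufix hvfix
    rw [h0] at this
    exact (mul_eq_zero.mp this.symm).resolve_left hm'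
  refine ⟨hSO, ?_, ?_⟩
  · -- self-duality
    intro hsd
    have hso : IsSelfOrthogonalSet (C : Set (Fin s × ZMod m → F)) := hsd.le
    refine Set.Subset.antisymm (hSO hso) ?_
    intro a ha
    set abar : Fin s × ZMod m → F := fun ij => a ij.1 with habar
    have hfix : qcShift abar = abar := rfl
    have hdual : abar ∈ dualSet (C : Set (Fin s × ZMod m → F)) := by
      intro w hw
      rw [qc_inner_fixed abar w hfix]
      exact ha (qcPsi w) (hψ w hw)
    have hmem : abar ∈ C := by
      have h2 := hdual; rw [← hsd] at h2; exact h2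
    exact ⟨abar, ⟨hmem, hfix⟩, rfl⟩
  · -- LCD
    intro hlcd
    refine Set.Subset.antisymm ?_ ?_
    · rintro a ⟨⟨u, ⟨huC, hufix⟩, rfl⟩, hadual⟩
      have hdual : u ∈ dualSet (C : Set (Fin s × ZMod m → F)) := by
        intro w hw
        rw [qc_inner_fixed u w hufix]
        exact hadual (qcPsi w) (hψ w hw)
      have : u ∈ (↑C ∩ dualSet (C : Set (Fin s × ZMod m → F)) : Set _) := ⟨huC, hdual⟩
      rw [hlcd] at this
      rw [Set.mem_singleton_iff] at this
      subst this
      rfl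
    · intro a ha
      rw [Set.mem_singleton_iff] at ha
      subst ha
      refine ⟨⟨0, ⟨C.zero_mem, rfl⟩, rfl⟩, ?_⟩
      intro v hv
      simp [eInner]
end

section
/- Let F be a finite field of characteristic p with m ≡ 1 (mod p), and let C be a linear code of length n = cm + f over F with a permutation automorphism σ of type m-(c,f), i.e. σ is a product of c disjoint cycles of length m together with f fixed points. Then: (1) if C is Euclidean self-orthogonal, so is C_π; (2) if C is Euclidean self-dual, so is C_π; (3) if C is Euclidean LCD, so is C_π. -/
open Finset

/-- The permutation action of a permutation of type `m-(c,f)` (c disjoint `m`-cycles and `f`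
fixed points) on `F^{cm+f}`, where coordinates are indexed by `(Fin c × ZMod m) ⊕ Fin f`. -/
def aqcShift {F : Type*} {c m f : ℕ} (v : (Fin c × ZMod m) ⊕ Fin f → F) :
    (Fin c × ZMod m) ⊕ Fin f → F :=
  fun x => match x with
  | .inl ij => v (.inl (ij.1, ij.2 + 1))
  | .inr j => v (.inr j)

/-- The projection `π : F^{cm+f} → F^{c+f}`; on a `σ`-fixed vector it returns the common value
on each cycle (fixed points counted as cycles of length 1). -/
def aqcPi {F : Type*} {c m f : ℕ} (v : (Fin c × ZMod m) ⊕ Fin f → F) :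
    Fin c ⊕ Fin f → F :=
  fun x => match x with
  | .inl i => v (.inl (i, 0))
  | .inr j => v (.inr j)

/-- The fixed subcode `F_σ(C)` for a permutation of type `m-(c,f)`. -/
def aqcFixedCode {F : Type*} [Field F] {c m f : ℕ}
    (C : Submodule F ((Fin c × ZMod m) ⊕ Fin f → F)) : Set ((Fin c × ZMod m) ⊕ Fin f → F) :=
  {v | v ∈ C ∧ aqcShift v = v}

/-- The subcode `E_σ(C)` for a permutation of type `m-(c,f)`: codewords whose coordinate sum
over every cycle (including the singleton cycles at the fixed points) vanishes. -/
def aqcEvenCode {F : Type*} [Field F] {c m f : ℕ} [NeZero m]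
    (C : Submodule F ((Fin c × ZMod m) ⊕ Fin f → F)) : Set ((Fin c × ZMod m) ⊕ Fin f → F) :=
  {v | v ∈ C ∧ (∀ i : Fin c, ∑ j : ZMod m, v (.inl (i, j)) = 0) ∧ (∀ j : Fin f, v (.inr j) = 0)}

set_option linter.unusedSectionVars false

section Aux

variable {F : Type*} [Field F] {c m f : ℕ}

/-- The lift of a vector in `F^{c+f}` to a σ-fixed vector in `F^{cm+f}`. -/
def aqcLift (w : Fin c ⊕ Fin f → F) : (Fin c × ZMod m) ⊕ Fin f → F :=
  fun x => match x with
  | .inl ij => w (.inl ij.1)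
  | .inr j => w (.inr j)

lemma aqcShift_lift (w : Fin c ⊕ Fin f → F) : aqcShift (aqcLift (m := m) w) = aqcLift w := by
  funext x; cases x <;> rfl

lemma aqcPi_lift (w : Fin c ⊕ Fin f → F) : aqcPi (aqcLift (m := m) w) = w := by
  funext x; cases x <;> rfl

lemma aqcShift_iterate_inl (v : (Fin c × ZMod m) ⊕ Fin f → F) (k : ℕ) (i : Fin c) (j : ZMod m) :
    (aqcShift^[k] v) (.inl (i, j)) = v (.inl (i, j + (k : ZMod m))) := by
  induction k generalizing j with
  | zero => simp
  | succ k ih =>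
    rw [Function.iterate_succ_apply']
    show (aqcShift^[k] v) (.inl (i, j + 1)) = _
    rw [ih]
    push_cast
    ring_nf

lemma aqcShift_iterate_inr (v : (Fin c × ZMod m) ⊕ Fin f → F) (k : ℕ) (j : Fin f) :
    (aqcShift^[k] v) (.inr j) = v (.inr j) := by
  induction k with
  | zero => rfl
  | succ k ih => rw [Function.iterate_succ_apply']; exact ih

lemma aqc_fixed_apply [NeZero m] {v : (Fin c × ZMod m) ⊕ Fin f → F} (hv : aqcShift v = v)
    (i : Fin c) (j : ZMod m) : v (.inl (i, j)) = v (.inl (i, 0)) := by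
  have h := aqcShift_iterate_inl v j.val i 0
  rw [Function.iterate_fixed hv] at h
  rw [ZMod.natCast_rightInverse j, zero_add] at h
  exact h.symm

lemma aqcLift_pi [NeZero m] {v : (Fin c × ZMod m) ⊕ Fin f → F} (hv : aqcShift v = v) :
    aqcLift (aqcPi v) = v := by
  funext x
  cases x with
  | inl ij => exact (aqc_fixed_apply hv ij.1 ij.2).symm
  | inr j => rfl

lemma eInner_shift [NeZero m] (u v : (Fin c × ZMod m) ⊕ Fin f → F) :
    eInner (aqcShift u) (aqcShift v) = eInner u v := by
  unfold eInner
  rw [Fintype.sum_sum_type, Fintype.sum_sum_type]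
  congr 1
  exact Fintype.sum_equiv (Equiv.prodCongr (Equiv.refl (Fin c)) (Equiv.addRight (1 : ZMod m)))
    _ _ (fun x => rfl)

lemma eInner_fixed_shift [NeZero m] {v : (Fin c × ZMod m) ⊕ Fin f → F} (hv : aqcShift v = v)
    (u : (Fin c × ZMod m) ⊕ Fin f → F) : eInner v (aqcShift u) = eInner v u := by
  have h := eInner_shift v u
  rwa [hv] at h

lemma eInner_fixed_iterate [NeZero m] {v : (Fin c × ZMod m) ⊕ Fin f → F} (hv : aqcShift v = v)
    (u : (Fin c × ZMod m) ⊕ Fin f → F) (k : ℕ) : eInner v (aqcShift^[k] u) = eInner v u := by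
  induction k with
  | zero => rfl
  | succ k ih => rw [Function.iterate_succ_apply', eInner_fixed_shift hv, ih]

lemma eInner_pi [NeZero m] {u v : (Fin c × ZMod m) ⊕ Fin f → F}
    (hu : aqcShift u = u) (hv : aqcShift v = v) (hm1 : (m : F) = 1) :
    eInner (aqcPi u) (aqcPi v) = eInner u v := by
  unfold eInner
  rw [Fintype.sum_sum_type, Fintype.sum_sum_type]
  congr 1
  rw [Fintype.sum_prod_type]
  have : ∀ i : Fin c, ∑ j : ZMod m, u (.inl (i, j)) * v (.inl (i, j))
      = u (.inl (i, 0)) * v (.inl (i, 0)) := by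
    intro i
    rw [Finset.sum_congr rfl (fun j _ => by rw [aqc_fixed_apply hu, aqc_fixed_apply hv])]
    rw [Finset.sum_const, Finset.card_univ, ZMod.card, nsmul_eq_mul, hm1, one_mul]
  rw [Finset.sum_congr rfl fun i _ => this i]
  rfl

lemma eInner_sum {ι κ : Type*} [Fintype ι] (v : ι → F) (s : Finset κ) (g : κ → ι → F) :
    eInner v (∑ k ∈ s, g k) = ∑ k ∈ s, eInner v (g k) := by
  unfold eInner
  simp only [Finset.sum_apply, Finset.mul_sum]
  exact Finset.sum_comm

/-- Orbit sum operator. -/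
def aqcT (v : (Fin c × ZMod m) ⊕ Fin f → F) : (Fin c × ZMod m) ⊕ Fin f → F :=
  ∑ k ∈ Finset.range m, aqcShift^[k] v

lemma sum_range_zmod [NeZero m] (g : ZMod m → F) :
    ∑ k ∈ Finset.range m, g (k : ZMod m) = ∑ k : ZMod m, g k := by
  rw [← Fin.sum_univ_eq_sum_range (fun k => g (k : ZMod m)) m]
  apply Fintype.sum_bijective (fun k : Fin m => ((k : ℕ) : ZMod m))
  · rw [Fintype.bijective_iff_injective_and_card]
    refine ⟨fun a b hab => ?_, by simp [ZMod.card]⟩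
    have h2 := congrArg ZMod.val hab
    simp only [ZMod.val_cast_of_lt a.isLt, ZMod.val_cast_of_lt b.isLt] at h2
    exact Fin.ext h2
  · intro k; rfl

lemma aqcT_apply_inl [NeZero m] (v : (Fin c × ZMod m) ⊕ Fin f → F) (i : Fin c) (j : ZMod m) :
    aqcT v (.inl (i, j)) = ∑ k : ZMod m, v (.inl (i, k)) := by
  unfold aqcT
  rw [Finset.sum_apply]
  rw [Finset.sum_congr rfl fun k _ => aqcShift_iterate_inl v k i j]
  rw [sum_range_zmod (fun t => v (.inl (i, j + t)))]
  exact Fintype.sum_equiv (Equiv.addLeft j) _ _ (fun k => rfl)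

lemma aqcT_fixed [NeZero m] (v : (Fin c × ZMod m) ⊕ Fin f → F) : aqcShift (aqcT v) = aqcT v := by
  funext x
  cases x with
  | inl ij =>
    show aqcT v (.inl (ij.1, ij.2 + 1)) = aqcT v (.inl (ij.1, ij.2))
    rw [aqcT_apply_inl, aqcT_apply_inl]
  | inr j => rfl

lemma aqc_iterate_mem {C : Submodule F ((Fin c × ZMod m) ⊕ Fin f → F)}
    (hC : ∀ v, v ∈ C ↔ aqcShift v ∈ C) {v} (hv : v ∈ C) (k : ℕ) : aqcShift^[k] v ∈ C := by
  induction k with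
  | zero => exact hv
  | succ k ih => rw [Function.iterate_succ_apply']; exact (hC _).mp ih

lemma aqcT_mem {C : Submodule F ((Fin c × ZMod m) ⊕ Fin f → F)}
    (hC : ∀ v, v ∈ C ↔ aqcShift v ∈ C) {v} (hv : v ∈ C) : aqcT v ∈ C :=
  Submodule.sum_mem _ fun k _ => aqc_iterate_mem hC hv k

lemma eInner_fixed_T [NeZero m] {v : (Fin c × ZMod m) ⊕ Fin f → F} (hv : aqcShift v = v)
    (hm1 : (m : F) = 1) (u : (Fin c × ZMod m) ⊕ Fin f → F) :
    eInner v (aqcT u) = eInner v u := by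
  unfold aqcT
  rw [eInner_sum]
  rw [Finset.sum_congr rfl fun k _ => eInner_fixed_iterate hv u k]
  rw [Finset.sum_const, Finset.card_range, nsmul_eq_mul, hm1, one_mul]

lemma aqcLift_mem_dual [NeZero m] {C : Submodule F ((Fin c × ZMod m) ⊕ Fin f → F)}
    (hC : ∀ v, v ∈ C ↔ aqcShift v ∈ C) (hm1 : (m : F) = 1)
    {w : Fin c ⊕ Fin f → F} (hw : w ∈ dualSet (aqcPi '' aqcFixedCode C)) :
    aqcLift w ∈ dualSet (C : Set ((Fin c × ZMod m) ⊕ Fin f → F)) := by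
  intro u hu
  have h1 : eInner (aqcLift w) u = eInner (aqcLift w) (aqcT u) :=
    (eInner_fixed_T (aqcShift_lift w) hm1 u).symm
  rw [h1, ← eInner_pi (aqcShift_lift w) (aqcT_fixed u) hm1, aqcPi_lift]
  exact hw _ ⟨aqcT u, ⟨aqcT_mem hC hu, aqcT_fixed u⟩, rfl⟩

lemma aqcShift_zero : aqcShift (0 : (Fin c × ZMod m) ⊕ Fin f → F) = 0 := by
  funext x; cases x <;> rfl

lemma aqcPi_zero : aqcPi (0 : (Fin c × ZMod m) ⊕ Fin f → F) = 0 := by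
  funext x; cases x <;> rfl

end Aux

/-- Let `F` be a finite field of characteristic `p` with `m ≡ 1 (mod p)`,
and let `C` be a linear code of length `n = cm + f` over `F` with a permutation automorphism
`σ` of type `m-(c,f)`. Then `C_π = π(F_σ(C))` inherits being self-orthogonal, self-dual,
and LCD (Euclidean inner product) from `C`. -/
theorem aqc_proj_code {F : Type*} [Field F] [Fintype F] (p : ℕ) [CharP F p]
    {c m f : ℕ} [NeZero m] (hm : m ≡ 1 [MOD p])
    (C : Submodule F ((Fin c × ZMod m) ⊕ Fin f → F))
    (hC : ∀ v, v ∈ C ↔ aqcShift v ∈ C) :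
    (IsSelfOrthogonalSet (C : Set ((Fin c × ZMod m) ⊕ Fin f → F)) →
      IsSelfOrthogonalSet (aqcPi '' aqcFixedCode C)) ∧
    (IsSelfDualSet (C : Set ((Fin c × ZMod m) ⊕ Fin f → F)) →
      IsSelfDualSet (aqcPi '' aqcFixedCode C)) ∧
    (IsLCDSet (C : Set ((Fin c × ZMod m) ⊕ Fin f → F)) →
      IsLCDSet (aqcPi '' aqcFixedCode C)) := by
  have hm1 : (m : F) = 1 := by
    have := (CharP.natCast_eq_natCast F p (a := m) (b := 1)).mpr hm
    simpa using this
  have part1 : IsSelfOrthogonalSet (C : Set ((Fin c × ZMod m) ⊕ Fin f → F)) →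
      IsSelfOrthogonalSet (aqcPi '' aqcFixedCode C) := by
    intro hso a ha b hb
    obtain ⟨u, ⟨huC, huf⟩, rfl⟩ := ha
    obtain ⟨v, ⟨hvC, hvf⟩, rfl⟩ := hb
    rw [eInner_pi huf hvf hm1]
    exact hso huC v hvC
  refine ⟨part1, ?_, ?_⟩
  · -- self-dual
    intro hsd
    apply Set.Subset.antisymm
    · exact part1 (subset_of_eq hsd)
    · intro w hw
      have h := aqcLift_mem_dual hC hm1 hw
      rw [← hsd] at h
      exact ⟨aqcLift w, ⟨h, aqcShift_lift w⟩, aqcPi_lift w⟩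
  · -- LCD
    intro hlcd
    apply Set.Subset.antisymm
    · rintro w ⟨⟨v, ⟨hvC, hvf⟩, rfl⟩, hdual⟩
      have hvd : v ∈ dualSet (C : Set ((Fin c × ZMod m) ⊕ Fin f → F)) := by
        rw [← aqcLift_pi hvf]
        exact aqcLift_mem_dual hC hm1 hdual
      have hv0 : v = 0 := by
        have : v ∈ ((C : Set ((Fin c × ZMod m) ⊕ Fin f → F)) ∩
            dualSet (C : Set ((Fin c × ZMod m) ⊕ Fin f → F))) := ⟨hvC, hvd⟩
        rw [hlcd] at this
        exact this
      rw [hv0, aqcPi_zero]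
      rfl
    · intro w hw
      rw [Set.mem_singleton_iff] at hw
      subst hw
      refine ⟨⟨0, ⟨C.zero_mem, aqcShift_zero⟩, aqcPi_zero⟩, ?_⟩
      intro z _
      simp [eInner]
end

section
/- Let F be a finite field and let C₁, C₂ be linear codes of length n over F such that C₁ ∩ C₂ = {0} and C₁ is orthogonal to C₂ with respect to the Euclidean inner product (u·v = 0 for all u ∈ C₁, v ∈ C₂). Set C = C₁ ⊕ C₂ (the internal direct sum C₁ + C₂). Then C is an LCD code if and only if both C₁ and C₂ are LCD codes. -/
open Finset

lemma eInner_comm {F : Type*} [Field F] {ι : Type*} [Fintype ι] (u v : ι → F) :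
    eInner u v = eInner v u := by
  simp [eInner, mul_comm]

lemma eInner_add_left {F : Type*} [Field F] {ι : Type*} [Fintype ι] (u w v : ι → F) :
    eInner (u + w) v = eInner u v + eInner w v := by
  simp [eInner, add_mul, Finset.sum_add_distrib]

lemma eInner_zero_left {F : Type*} [Field F] {ι : Type*} [Fintype ι] (v : ι → F) :
    eInner 0 v = 0 := by
  simp [eInner]

/-- Let `C₁, C₂` be linear codes of length `n` over a finite field with
`C₁ ∩ C₂ = {0}` and `C₁ ⊥ C₂` (Euclidean inner product), and let `C = C₁ ⊕ C₂`. Then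
`C` is an LCD code if and only if both `C₁` and `C₂` are. -/
theorem direct_sum_code_iff {F : Type*} [Field F] [Fintype F] {n : ℕ}
    (C₁ C₂ : Submodule F (Fin n → F)) (hint : C₁ ⊓ C₂ = ⊥)
    (horth : ∀ u ∈ C₁, ∀ v ∈ C₂, eInner u v = 0) :
    IsLCDSet ((C₁ ⊔ C₂ : Submodule F (Fin n → F)) : Set (Fin n → F)) ↔
      (IsLCDSet (C₁ : Set (Fin n → F)) ∧ IsLCDSet (C₂ : Set (Fin n → F))) := by
  constructor
  · intro h
    constructor
    · ext x
      simp only [Set.mem_inter_iff, Set.mem_singleton_iff]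
      constructor
      · rintro ⟨hx1, hxd⟩
        have hx1' : (x : Fin n → F) ∈ C₁ := hx1
        have hxC : x ∈ C₁ ⊔ C₂ := Submodule.mem_sup_left hx1'
        have hdual : x ∈ dualSet ((C₁ ⊔ C₂ : Submodule F (Fin n → F)) : Set (Fin n → F)) := by
          intro v hv
          obtain ⟨a, ha, b, hb, rfl⟩ := Submodule.mem_sup.mp hv
          have h1 : eInner x a = 0 := hxd a ha
          have h2 : eInner x b = 0 := horth x hx1' b hb
          calc eInner x (a + b) = eInner (a + b) x := eInner_comm _ _
            _ = eInner a x + eInner b x := eInner_add_left _ _ _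
            _ = eInner x a + eInner x b := by rw [eInner_comm a x, eInner_comm b x]
            _ = 0 := by rw [h1, h2, add_zero]
        have : x ∈ ({0} : Set (Fin n → F)) := h ▸ Set.mem_inter hxC hdual
        simpa using this
      · rintro rfl
        exact ⟨C₁.zero_mem, fun v _ => eInner_zero_left v⟩
    · ext x
      simp only [Set.mem_inter_iff, Set.mem_singleton_iff]
      constructor
      · rintro ⟨hx2, hxd⟩
        have hx2' : (x : Fin n → F) ∈ C₂ := hx2
        have hxC : x ∈ C₁ ⊔ C₂ := Submodule.mem_sup_right hx2'
        have hdual : x ∈ dualSet ((C₁ ⊔ C₂ : Submodule F (Fin n → F)) : Set (Fin n → F)) := by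
          intro v hv
          obtain ⟨a, ha, b, hb, rfl⟩ := Submodule.mem_sup.mp hv
          have h1 : eInner x a = 0 := by
            rw [eInner_comm]; exact horth a ha x hx2'
          have h2 : eInner x b = 0 := hxd b hb
          calc eInner x (a + b) = eInner (a + b) x := eInner_comm _ _
            _ = eInner a x + eInner b x := eInner_add_left _ _ _
            _ = eInner x a + eInner x b := by rw [eInner_comm a x, eInner_comm b x]
            _ = 0 := by rw [h1, h2, add_zero]
        have : x ∈ ({0} : Set (Fin n → F)) := h ▸ Set.mem_inter hxC hdual
        simpa using this
      · rintro rfl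
        exact ⟨C₂.zero_mem, fun v _ => eInner_zero_left v⟩
  · rintro ⟨h1, h2⟩
    ext x
    simp only [Set.mem_inter_iff, Set.mem_singleton_iff]
    constructor
    · rintro ⟨hxC, hxd⟩
      obtain ⟨a, ha, b, hb, rfl⟩ := Submodule.mem_sup.mp hxC
      have ha0 : a = 0 := by
        have hadual : a ∈ dualSet (C₁ : Set (Fin n → F)) := by
          intro v hv
          have hx : eInner (a + b) v = 0 := hxd v (Submodule.mem_sup_left hv)
          rw [eInner_add_left] at hx
          have hbv : eInner b v = 0 := by rw [eInner_comm]; exact horth v hv b hb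
          rw [hbv, add_zero] at hx
          exact hx
        have : a ∈ ({0} : Set (Fin n → F)) := h1 ▸ Set.mem_inter ha hadual
        simpa using this
      have hb0 : b = 0 := by
        have hbdual : b ∈ dualSet (C₂ : Set (Fin n → F)) := by
          intro v hv
          have hx : eInner (a + b) v = 0 := hxd v (Submodule.mem_sup_right hv)
          rw [eInner_add_left] at hx
          have hav : eInner a v = 0 := horth a ha v hv
          rw [hav, zero_add] at hx
          exact hx
        have : b ∈ ({0} : Set (Fin n → F)) := h2 ▸ Set.mem_inter hb hbdual
        simpa using this
      rw [ha0, hb0, add_zero]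
    · rintro rfl
      exact ⟨(C₁ ⊔ C₂).zero_mem, fun v _ => eInner_zero_left v⟩
end

section
/- Let F be a finite field of characteristic p with p not dividing m, and let C be a linear code of length n = cm + f over F with a permutation automorphism σ of type m-(c,f) (c disjoint m-cycles and f fixed points). Then C is Euclidean self-orthogonal if and only if both F_σ(C) and E_σ(C) are Euclidean self-orthogonal. -/
open Finset

section AqcAux

variable {F : Type*} [Field F] {c m f : ℕ} [NeZero m]

/-- Shift by `k` steps. -/
def aqcShiftK (k : ZMod m) (v : (Fin c × ZMod m) ⊕ Fin f → F) :
    (Fin c × ZMod m) ⊕ Fin f → F :=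
  fun x => match x with
  | .inl ij => v (.inl (ij.1, ij.2 + k))
  | .inr j => v (.inr j)

lemma aqcShiftK_zero (v : (Fin c × ZMod m) ⊕ Fin f → F) : aqcShiftK 0 v = v := by
  funext x; cases x <;> simp [aqcShiftK]

lemma aqcShift_shiftK (k : ZMod m) (v : (Fin c × ZMod m) ⊕ Fin f → F) :
    aqcShift (aqcShiftK k v) = aqcShiftK (k + 1) v := by
  funext x; cases x with
  | inl ij => show v (.inl (ij.1, ij.2 + 1 + k)) = v (.inl (ij.1, ij.2 + (k + 1))); ring_nf
  | inr j => rfl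

lemma aqcShiftK_mem (C : Submodule F ((Fin c × ZMod m) ⊕ Fin f → F))
    (hC : ∀ v, v ∈ C ↔ aqcShift v ∈ C) {v} (hv : v ∈ C) (k : ZMod m) :
    aqcShiftK k v ∈ C := by
  have h : ∀ n : ℕ, aqcShiftK (n : ZMod m) v ∈ C := by
    intro n
    induction n with
    | zero => simpa [aqcShiftK_zero] using hv
    | succ n ih =>
      have := (hC _).mp ih
      rw [aqcShift_shiftK] at this
      simpa [Nat.cast_succ] using this
  simpa using h k.val

/-- Averaging projector onto the fixed space. -/
def aqcAvg (v : (Fin c × ZMod m) ⊕ Fin f → F) : (Fin c × ZMod m) ⊕ Fin f → F :=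
  (m : F)⁻¹ • ∑ k : ZMod m, aqcShiftK k v

lemma aqcAvg_apply_inl (v : (Fin c × ZMod m) ⊕ Fin f → F) (i : Fin c) (j : ZMod m) :
    aqcAvg v (.inl (i, j)) = (m : F)⁻¹ * ∑ k : ZMod m, v (.inl (i, k)) := by
  have : aqcAvg v (.inl (i, j)) = (m : F)⁻¹ * ∑ k : ZMod m, v (.inl (i, j + k)) := by
    simp [aqcAvg, Finset.sum_apply, aqcShiftK]
  rw [this]
  congr 1
  exact Fintype.sum_equiv (Equiv.addLeft j) _ _ (fun k => rfl)

lemma aqcAvg_apply_inr (hm0 : (m : F) ≠ 0) (v : (Fin c × ZMod m) ⊕ Fin f → F) (j : Fin f) :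
    aqcAvg v (.inr j) = v (.inr j) := by
  have : aqcAvg v (.inr j) = (m : F)⁻¹ * ∑ _k : ZMod m, v (.inr j) := by
    simp [aqcAvg, Finset.sum_apply, aqcShiftK]
  rw [this, Finset.sum_const, Finset.card_univ, ZMod.card, nsmul_eq_mul,
    inv_mul_cancel_left₀ hm0]

lemma aqcAvg_fixed (v : (Fin c × ZMod m) ⊕ Fin f → F) : aqcShift (aqcAvg v) = aqcAvg v := by
  funext x; cases x with
  | inl ij => show aqcAvg v (.inl (ij.1, ij.2 + 1)) = _; rw [aqcAvg_apply_inl, aqcAvg_apply_inl]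
  | inr j => rfl

lemma aqcAvg_mem (C : Submodule F ((Fin c × ZMod m) ⊕ Fin f → F))
    (hC : ∀ v, v ∈ C ↔ aqcShift v ∈ C) {v} (hv : v ∈ C) : aqcAvg v ∈ C :=
  C.smul_mem _ (Submodule.sum_mem C fun k _ => aqcShiftK_mem C hC hv k)

lemma aqc_fixed_const {u : (Fin c × ZMod m) ⊕ Fin f → F} (hu : aqcShift u = u)
    (i : Fin c) (j : ZMod m) : u (.inl (i, j)) = u (.inl (i, 0)) := by
  have step : ∀ k : ZMod m, u (.inl (i, k + 1)) = u (.inl (i, k)) := fun k =>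
    congrFun hu (.inl (i, k))
  have h : ∀ n : ℕ, u (.inl (i, (n : ZMod m))) = u (.inl (i, 0)) := by
    intro n
    induction n with
    | zero => simp
    | succ n ih => rw [Nat.cast_succ, step, ih]
  simpa using h j.val

lemma aqc_eInner_comm {ι : Type*} [Fintype ι] (u v : ι → F) : eInner u v = eInner v u := by
  simp [eInner, mul_comm]

lemma aqc_eInner_fixed_even {u w : (Fin c × ZMod m) ⊕ Fin f → F} (hu : aqcShift u = u)
    (hw1 : ∀ i : Fin c, ∑ j : ZMod m, w (.inl (i, j)) = 0)
    (hw2 : ∀ j : Fin f, w (.inr j) = 0) : eInner u w = 0 := by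
  rw [eInner, Fintype.sum_sum_type]
  have h1 : ∑ x : Fin c × ZMod m, u (.inl x) * w (.inl x) = 0 := by
    rw [Fintype.sum_prod_type]
    refine Finset.sum_eq_zero fun i _ => ?_
    calc ∑ j : ZMod m, u (.inl (i, j)) * w (.inl (i, j))
        = u (.inl (i, 0)) * ∑ j : ZMod m, w (.inl (i, j)) := by
          rw [Finset.mul_sum]; exact Finset.sum_congr rfl fun j _ => by
            rw [aqc_fixed_const hu]
      _ = 0 := by rw [hw1, mul_zero]
  simp [h1, hw2]

lemma aqc_eInner_expand {ι : Type*} [Fintype ι] (a b a' b' : ι → F) :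
    eInner (a + b) (a' + b') =
      eInner a a' + eInner a b' + eInner b a' + eInner b b' := by
  simp only [eInner, Pi.add_apply, ← Finset.sum_add_distrib]
  exact Finset.sum_congr rfl fun i _ => by ring

end AqcAux

/-- Let `F` be a finite field of characteristic `p` with `p ∤ m`, and let
`C` be a linear code of length `n = cm + f` over `F` with a permutation automorphism `σ` of
type `m-(c,f)`. Then `C` is Euclidean self-orthogonal if and only if both `F_σ(C)` and `E_σ(C)`
are Euclidean self-orthogonal. -/
theorem aqc_code_iff_fixed_and_even {F : Type*} [Field F] [Fintype F] (p : ℕ) [CharP F p]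
    {c m f : ℕ} [NeZero m] (hm : ¬ p ∣ m)
    (C : Submodule F ((Fin c × ZMod m) ⊕ Fin f → F))
    (hC : ∀ v, v ∈ C ↔ aqcShift v ∈ C) :
    IsSelfOrthogonalSet (C : Set ((Fin c × ZMod m) ⊕ Fin f → F)) ↔
      (IsSelfOrthogonalSet (aqcFixedCode C) ∧ IsSelfOrthogonalSet (aqcEvenCode C)) := by
  have hm0 : (m : F) ≠ 0 := fun h => hm ((CharP.cast_eq_zero_iff F p m).mp h)
  constructor
  · intro h
    exact ⟨fun x hx v hv => h hx.1 _ hv.1, fun x hx v hv => h hx.1 _ hv.1⟩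
  · rintro ⟨h1, h2⟩ u hu v hv
    -- decompositions
    have huF : aqcAvg u ∈ aqcFixedCode C := ⟨aqcAvg_mem C hC hu, aqcAvg_fixed u⟩
    have hvF : aqcAvg v ∈ aqcFixedCode C := ⟨aqcAvg_mem C hC hv, aqcAvg_fixed v⟩
    have heven : ∀ w : (Fin c × ZMod m) ⊕ Fin f → F, w ∈ C → w - aqcAvg w ∈ aqcEvenCode C := by
      intro w hw
      refine ⟨C.sub_mem hw (aqcAvg_mem C hC hw), fun i => ?_, fun j => ?_⟩
      · simp only [Pi.sub_apply, Finset.sum_sub_distrib]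
        have : ∀ j : ZMod m, aqcAvg w (.inl (i, j)) =
            (m : F)⁻¹ * ∑ k : ZMod m, w (.inl (i, k)) := fun j => aqcAvg_apply_inl w i j
        rw [Finset.sum_congr rfl fun j _ => this j, Finset.sum_const, Finset.card_univ,
          ZMod.card, nsmul_eq_mul, mul_inv_cancel_left₀ hm0, sub_self]
      · simp [aqcAvg_apply_inr hm0]
    have huE := heven u hu
    have hvE := heven v hv
    show eInner u v = 0
    have hdecu : u = aqcAvg u + (u - aqcAvg u) := by abel
    have hdecv : v = aqcAvg v + (v - aqcAvg v) := by abel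
    rw [hdecu, hdecv, aqc_eInner_expand]
    rw [h1 huF _ hvF, h2 huE _ hvE,
      aqc_eInner_fixed_even huF.2 hvE.2.1 hvE.2.2,
      aqc_eInner_comm, aqc_eInner_fixed_even hvF.2 huE.2.1 huE.2.2]
    ring
end

section
/- Let F be a finite field of characteristic p, let C be a linear code of length n over F with a permutation automorphism σ, and suppose every cycle of σ has length divisible by p. Then the fixed subcode F_σ(C) is self-orthogonal with respect to the Euclidean inner product. -/
open Finset

/-- Let `C` be a linear code over a finite field of characteristic `p`
with a permutation automorphism `σ` all of whose cycles have length divisible by `p`.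
Then `F_σ(C)` is self-orthogonal with respect to the Euclidean inner product. -/
theorem fixed_code_self_orthogonal {F : Type*} [Field F] [Fintype F] (p : ℕ) [CharP F p]
    {n : ℕ} (σ : Equiv.Perm (Fin n)) (C : Submodule F (Fin n → F))
    (hC : ∀ v, v ∈ C ↔ permAct σ v ∈ C)
    (hcyc : ∀ i : Fin n, p ∣ (orbitOf σ i).card) :
    IsSelfOrthogonalSet (fixedCode σ C) := by
  intro u hu v hv
  have hufix : permAct σ u = u := hu.2
  have hvfix : permAct σ v = v := hv.2
  -- fixed vectors are constant on orbits
  have hconst : ∀ (w : Fin n → F), permAct σ w = w →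
      ∀ i j, σ.SameCycle i j → w j = w i := by
    intro w hw i j hij
    have hstep : ∀ k, w (σ k) = w k := fun k => congrFun hw k
    have hpow : ∀ (k : ℕ) (x : Fin n), w ((σ ^ k) x) = w x := by
      intro k
      induction k with
      | zero => intro x; simp
      | succ m ih =>
        intro x
        have : (σ ^ (m + 1)) x = (σ ^ m) (σ x) := by
          rw [pow_succ]; rfl
        rw [this, ih, hstep]
    obtain ⟨k, hk⟩ := hij.exists_pow_eq'
    rw [← hk.2, hpow]
  classical
  show eInner u v = 0
  unfold eInner
  -- partition the sum by orbits
  have key : ∀ i : Fin n, ∑ j ∈ orbitOf σ i, u j * v j = 0 := by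
    intro i
    have : ∀ j ∈ orbitOf σ i, u j * v j = u i * v i := by
      intro j hj
      simp only [orbitOf, Finset.mem_filter] at hj
      rw [hconst u hufix i j hj.2, hconst v hvfix i j hj.2]
    rw [Finset.sum_congr rfl this, Finset.sum_const, nsmul_eq_mul]
    have : ((orbitOf σ i).card : F) = 0 := by
      rcases hcyc i with ⟨c, hc⟩
      rw [hc]
      push_cast
      simp [CharP.cast_eq_zero F p]
    rw [this, zero_mul]
  -- use the setoid of SameCycle
  let R : Setoid (Fin n) := ⟨σ.SameCycle, ⟨Equiv.Perm.SameCycle.refl σ,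
    fun h => h.symm, fun h1 h2 => h1.trans h2⟩⟩
  rw [Finset.sum_partition R]
  refine Finset.sum_eq_zero fun xbar hx => ?_
  obtain ⟨i, -, rfl⟩ := Finset.mem_image.mp hx
  have : Finset.univ.filter (fun y => @Quotient.mk'' _ R y = Quotient.mk'' i)
      = orbitOf σ i := by
    ext j
    simp only [Finset.mem_filter, Finset.mem_univ, true_and, orbitOf]
    constructor
    · intro h
      exact (Quotient.eq''.mp h).symm
    · intro h
      exact Quotient.sound' h.symm
  rw [this]
  exact key i
end

section
/- Let F be a finite field and let C be a quasi-cyclic code over F of length sm and index s. If C is self-orthogonal with respect to the Euclidean inner product, then the code C_ψ = ψ(C) ⊆ F^s is also self-orthogonal. -/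
open Finset

lemma qcShift_iterate {F : Type*} {s m : ℕ} (v : Fin s × ZMod m → F) (n : ℕ) :
    qcShift^[n] v = fun ij => v (ij.1, ij.2 + n) := by
  induction n with
  | zero => simp [qcShift]
  | succ n ih =>
    rw [Function.iterate_succ_apply', ih]
    funext ij
    simp only [qcShift]
    congr 1
    push_cast
    ring_nf

/-- If a quasi-cyclic code `C` of length `sm` and index `s` over a finite
field is self-orthogonal with respect to the Euclidean inner product, then so is
`C_ψ = ψ(C) ⊆ F^s`. -/
theorem psi_image_self_orthogonal {F : Type*} [Field F] [Fintype F] {s m : ℕ} [NeZero m]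
    (C : Submodule F (Fin s × ZMod m → F)) (hC : ∀ v, v ∈ C ↔ qcShift v ∈ C)
    (hso : IsSelfOrthogonalSet (C : Set (Fin s × ZMod m → F))) :
    IsSelfOrthogonalSet (qcPsi '' (C : Set (Fin s × ZMod m → F))) := by
  rintro x ⟨u, hu, rfl⟩ y ⟨v, hv, rfl⟩
  have key : ∀ k : ZMod m, eInner u (fun ij => v (ij.1, ij.2 + k)) = 0 := by
    intro k
    have hmem : ∀ n : ℕ, qcShift^[n] v ∈ C := by
      intro n
      induction n with
      | zero => simpa using hv
      | succ n ih => rw [Function.iterate_succ_apply']; exact (hC _).mp ih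
    have h0 := hso hu _ (hmem k.val)
    rw [qcShift_iterate] at h0
    simpa [ZMod.natCast_val, ZMod.cast_id] using h0
  calc eInner (qcPsi u) (qcPsi v)
      = ∑ i, ∑ j, ∑ k : ZMod m, u (i, j) * v (i, j + k) := by
        simp only [eInner, qcPsi]
        refine Finset.sum_congr rfl fun i _ => ?_
        rw [Finset.sum_mul_sum]
        refine Finset.sum_congr rfl fun j _ => ?_
        rw [← Equiv.sum_comp (Equiv.addLeft j) (fun j' => u (i, j) * v (i, j'))]
        simp [Equiv.addLeft]
    _ = ∑ i, ∑ k : ZMod m, ∑ j, u (i, j) * v (i, j + k) :=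
        Finset.sum_congr rfl fun i _ => Finset.sum_comm
    _ = ∑ k : ZMod m, ∑ i, ∑ j, u (i, j) * v (i, j + k) := Finset.sum_comm
    _ = 0 := Finset.sum_eq_zero fun k _ => by
        simpa [eInner, Fintype.sum_prod_type] using key k
end

section
/- Let F be a finite field and let C be a quasi-cyclic code over F of length sm and index s. If C is self-orthogonal with respect to the Euclidean inner product, then C_π = π(F_σ(C)) is contained in the dual code C_ψ^⊥ of C_ψ = ψ(C) in F^s. -/
open Finset

/-- If a quasi-cyclic code `C` of length `sm` and index `s` over a finite
field is self-orthogonal with respect to the Euclidean inner product, then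
`C_π = π(F_σ(C))` is contained in the dual code of `C_ψ = ψ(C)` in `F^s`. -/
theorem pi_image_subset_dual_psi_image {F : Type*} [Field F] [Fintype F] {s m : ℕ} [NeZero m]
    (C : Submodule F (Fin s × ZMod m → F)) (hC : ∀ v, v ∈ C ↔ qcShift v ∈ C)
    (hso : IsSelfOrthogonalSet (C : Set (Fin s × ZMod m → F))) :
    qcPi '' {v | v ∈ C ∧ qcShift v = v} ⊆ dualSet (qcPsi '' (C : Set (Fin s × ZMod m → F))) := by
  rintro _ ⟨v, ⟨hvC, hvfix⟩, rfl⟩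
  rintro _ ⟨w, hwC, rfl⟩
  have hconst : ∀ (i : Fin s) (j : ZMod m), v (i, j) = v (i, 0) := by
    intro i j
    have key : ∀ n : ℕ, v (i, (n : ZMod m)) = v (i, 0) := by
      intro n
      induction n with
      | zero => simp
      | succ k ih =>
        have := congrFun hvfix (i, (k : ZMod m))
        simp only [qcShift] at this
        rw [← ih, ← this]
        push_cast
        ring_nf
    rw [← ZMod.natCast_rightInverse j, key]
  have h0 : eInner v w = 0 := hso hvC w hwC
  have : eInner (qcPi v) (qcPsi w) = eInner v w := by
    simp only [eInner, qcPi, qcPsi, Finset.mul_sum, Fintype.sum_prod_type]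
    exact Finset.sum_congr rfl fun i _ => Finset.sum_congr rfl fun j _ => by rw [hconst i j]
  rw [this, h0]
end

section
/- Let F be a finite field and let C be a quasi-cyclic code over F of length sm and index s. If C is self-dual with respect to the Euclidean inner product, then C_π = π(F_σ(C)) equals the dual code C_ψ^⊥ of C_ψ = ψ(C) in F^s. -/
open Finset

/-- If a quasi-cyclic code `C` of length `sm` and index `s` over a finite
field is self-dual with respect to the Euclidean inner product, then
`C_π = π(F_σ(C))` equals the dual code of `C_ψ = ψ(C)` in `F^s`. -/
theorem pi_image_eq_dual_psi_image {F : Type*} [Field F] [Fintype F] {s m : ℕ} [NeZero m]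
    (C : Submodule F (Fin s × ZMod m → F)) (hC : ∀ v, v ∈ C ↔ qcShift v ∈ C)
    (hsd : IsSelfDualSet (C : Set (Fin s × ZMod m → F))) :
    qcPi '' {v | v ∈ C ∧ qcShift v = v} = dualSet (qcPsi '' (C : Set (Fin s × ZMod m → F))) := by
  ext u
  constructor
  · rintro ⟨v, ⟨hvC, hvfix⟩, rfl⟩ w ⟨c, hcC, rfl⟩
    -- v is constant on blocks
    have hconst : ∀ i (j : ZMod m), v (i, j) = v (i, 0) := by
      intro i j
      obtain ⟨n, rfl⟩ := ZMod.natCast_zmod_surjective j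
      induction n with
      | zero => simp
      | succ n ih =>
          have := congrFun hvfix (i, (n : ZMod m))
          simp only [qcShift] at this
          push_cast
          rw [this, ih]
    have hv_orth : eInner v c = 0 := by
      have : v ∈ dualSet (C : Set (Fin s × ZMod m → F)) := by
        rw [← hsd]; exact hvC
      exact this c hcC
    calc eInner (qcPi v) (qcPsi c)
        = ∑ i, ∑ j : ZMod m, v (i, j) * c (i, j) := by
          unfold eInner qcPi qcPsi
          refine Finset.sum_congr rfl fun i _ => ?_
          rw [Finset.mul_sum]
          exact Finset.sum_congr rfl fun j _ => by rw [hconst i j]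
      _ = eInner v c := by
          unfold eInner
          rw [Fintype.sum_prod_type]
      _ = 0 := hv_orth
  · intro hu
    refine ⟨fun ij => u ij.1, ⟨?_, rfl⟩, rfl⟩
    rw [← SetLike.mem_coe, hsd]
    intro c hcC
    have : eInner (fun ij : Fin s × ZMod m => u ij.1) c
        = eInner u (qcPsi c) := by
      unfold eInner qcPsi
      rw [Fintype.sum_prod_type]
      exact Finset.sum_congr rfl fun i _ => by rw [Finset.mul_sum]
    rw [this]
    exact hu _ ⟨c, hcC, rfl⟩
end

section
/- Let F be a finite field of characteristic p with p not dividing m, and let C be a quasi-cyclic code over F of length sm and index s. Then the codes C_ψ = ψ(C) and C_π = π(F_σ(C)) coincide: ψ(C) = π(F_σ(C)) as subspaces of F^s. -/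
open Finset

/-- If `F` has characteristic `p` with `p ∤ m` and `C` is a quasi-cyclic
code of length `sm` and index `s` over `F`, then `C_ψ = ψ(C)` and `C_π = π(F_σ(C))`
coincide as subsets of `F^s`. -/
theorem psi_image_eq_pi_image {F : Type*} [Field F] [Fintype F] (p : ℕ) [CharP F p]
    {s m : ℕ} [NeZero m] (hm : ¬ p ∣ m)
    (C : Submodule F (Fin s × ZMod m → F)) (hC : ∀ v, v ∈ C ↔ qcShift v ∈ C) :
    qcPsi '' (C : Set (Fin s × ZMod m → F)) = qcPi '' {v | v ∈ C ∧ qcShift v = v} := by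
  have hmF : (m : F) ≠ 0 := fun h => hm ((CharP.cast_eq_zero_iff F p m).mp h)
  ext u
  simp only [Set.mem_image, Set.mem_setOf_eq, SetLike.mem_coe]
  constructor
  · rintro ⟨v, hv, rfl⟩
    refine ⟨fun ij => ∑ j : ZMod m, v (ij.1, j), ⟨?_, ?_⟩, ?_⟩
    · have key : ∀ n : ℕ, (fun ij : Fin s × ZMod m => v (ij.1, ij.2 + (n : ZMod m))) ∈ C := by
        intro n
        induction n with
        | zero => simpa using hv
        | succ n ih =>
          have h2 := (hC _).mp ih
          have : qcShift (fun ij : Fin s × ZMod m => v (ij.1, ij.2 + (n : ZMod m))) =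
              (fun ij : Fin s × ZMod m => v (ij.1, ij.2 + ((n + 1 : ℕ) : ZMod m))) := by
            funext ij
            simp only [qcShift]
            congr 1
            push_cast
            ring_nf
          rwa [this] at h2
      have heq : (fun ij : Fin s × ZMod m => ∑ j : ZMod m, v (ij.1, j)) =
          ∑ k : ZMod m, (fun ij : Fin s × ZMod m => v (ij.1, ij.2 + ((k.val : ℕ) : ZMod m))) := by
        funext ij
        rw [Finset.sum_apply]
        refine (Fintype.sum_equiv (Equiv.addLeft ij.2) _ _ ?_).symm
        intro k
        simp [ZMod.natCast_val, ZMod.cast_id, add_comm]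
      rw [heq]
      exact Submodule.sum_mem C fun k _ => key k.val
    · rfl
    · rfl
  · rintro ⟨v, ⟨hv, hfix⟩, rfl⟩
    have step : ∀ (i : Fin s) (j : ZMod m), v (i, j + 1) = v (i, j) :=
      fun i j => congrFun hfix (i, j)
    have hn : ∀ (i : Fin s) (n : ℕ), v (i, (n : ZMod m)) = v (i, 0) := by
      intro i n
      induction n with
      | zero => simp
      | succ n ih =>
        have : ((n + 1 : ℕ) : ZMod m) = (n : ZMod m) + 1 := by push_cast; ring
        rw [this, step, ih]
    have hconst : ∀ (i : Fin s) (j : ZMod m), v (i, j) = v (i, 0) := by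
      intro i j
      have := hn i j.val
      rwa [ZMod.natCast_val, ZMod.cast_id] at this
    refine ⟨(m : F)⁻¹ • v, C.smul_mem _ hv, ?_⟩
    funext i
    simp only [qcPsi, qcPi, Pi.smul_apply, smul_eq_mul]
    calc ∑ j : ZMod m, (m : F)⁻¹ * v (i, j)
        = ∑ _j : ZMod m, (m : F)⁻¹ * v (i, 0) :=
          Finset.sum_congr rfl fun j _ => by rw [hconst]
      _ = (Fintype.card (ZMod m)) • ((m : F)⁻¹ * v (i, 0)) := by
          rw [Finset.sum_const, Finset.card_univ]
      _ = v (i, 0) := by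
          rw [ZMod.card, nsmul_eq_mul]
          field_simp
end
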